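/- Let $H(t,x)=\langle S(t)x,x\rangle$ with $S$ as above satisfying $S'+SA+A^*S\le-\mathrm{Id}$, and suppose for the evolution operator $U(t,\tau)$ restricted to the stable cone $E_\tau^s=\{0\}\cup\{x: H(t,T(t,\tau)x)>0 \ \forall t\ge\tau\}$ one has $\|U(t,\tau)\|\le \hat l_1\mu(t)^{\hat k_1}$ for $|t-\tau|\le\hat d$ ($\hat d, \hat l_1 > 0$, $\hat k_1 \ge 0$, $\mu$ a growth rate). Then for every $x\in E_\tau^s$: $H(\tau,x) \ge \frac{\hat d}{\hat l_1^2}\mu(\tau)^{-2\hat k_1}\|x\|^2$. -/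

import Mathlib

open Filter

/-- Bound `H(τ,x) ≥ (d̂/l̂₁²) μ(τ)^{-2k̂₁} ‖x‖²` for `x` in the stable cone
`E_τ^s`, under the Lyapunov-function inequality and the local norm bound on the
restricted evolution operator. -/
theorem stmt_18 {n : ℕ}
    (S S' A : ℝ → EuclideanSpace ℝ (Fin n) →L[ℝ] EuclideanSpace ℝ (Fin n))
    (hA : Continuous A)
    (hSderiv : ∀ t, HasDerivAt S (S' t) t)
    (hsym : ∀ (t : ℝ) (x y : EuclideanSpace ℝ (Fin n)),
      (inner ℝ (S t x) y : ℝ) = inner ℝ x (S t y))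
    (hineq : ∀ (t : ℝ) (x : EuclideanSpace ℝ (Fin n)),
      (inner ℝ (S' t x) x : ℝ) + inner ℝ (S t (A t x)) x + inner ℝ (S t x) (A t x) ≤ -‖x‖ ^ 2)
    -- the evolution operator of `x' = A(t)x`
    (T : ℝ → ℝ → EuclideanSpace ℝ (Fin n) →L[ℝ] EuclideanSpace ℝ (Fin n))
    (hTid : ∀ t, T t t = ContinuousLinearMap.id ℝ _)
    (hTcoc : ∀ t s r, (T t s).comp (T s r) = T t r)
    (hTderiv : ∀ (s : ℝ) (x : EuclideanSpace ℝ (Fin n)) (t : ℝ),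
      HasDerivAt (fun r => T r s x) (A t (T t s x)) t)
    -- the stable cone
    (Es : ℝ → Set (EuclideanSpace ℝ (Fin n)))
    (hEs : ∀ τ, Es τ = {x | x = 0 ∨ ∀ t, τ ≤ t → 0 < (inner ℝ (S t (T t τ x)) (T t τ x) : ℝ)})
    -- local bound on the restriction of `T` to the stable cones
    (μ : ℝ → ℝ)
    (μmono : Monotone μ) (μpos : ∀ t, 0 < μ t) (μ0 : μ 0 = 1)
    (μtop : Tendsto μ atTop atTop) (μbot : Tendsto μ atBot (nhds 0))
    (d l₁ k₁ : ℝ) (hd : 0 < d) (hl₁ : 0 < l₁) (hk₁ : 0 ≤ k₁)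
    (hU : ∀ t τ, |t - τ| ≤ d → ∀ x ∈ Es τ, ‖T t τ x‖ ≤ l₁ * μ t ^ k₁ * ‖x‖) :
    ∀ (τ : ℝ) (x : EuclideanSpace ℝ (Fin n)), x ∈ Es τ →
      d / l₁ ^ 2 * μ τ ^ (-(2 * k₁)) * ‖x‖ ^ 2 ≤ (inner ℝ (S τ x) x : ℝ) := by
  intro τ x hx
  rw [hEs] at hx
  rcases hx with h0 | hpos
  · subst h0; simp
  -- constants
  set L : ℝ := l₁ * μ τ ^ k₁ with hLdef
  have hμk : (0:ℝ) < μ τ ^ k₁ := Real.rpow_pos_of_pos (μpos τ) _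
  have hLpos : 0 < L := mul_pos hl₁ hμk
  set c : ℝ := ‖x‖ ^ 2 / L ^ 2 with hcdef
  -- the trajectory
  set u : ℝ → EuclideanSpace ℝ (Fin n) := fun r => T r τ x with hu
  have hcoc : ∀ t r, T t r (u r) = u t := by
    intro t r
    have h := hTcoc t r τ
    have := congrArg (fun (M : EuclideanSpace ℝ (Fin n) →L[ℝ] EuclideanSpace ℝ (Fin n)) => M x) h
    simpa [ContinuousLinearMap.comp_apply] using this
  -- membership of the trajectory in the stable cones
  have hmem : ∀ r, τ ≤ r → u r ∈ Es r := by
    intro r hr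
    rw [hEs]
    right
    intro t ht
    rw [hcoc t r]
    exact hpos t (hr.trans ht)
  -- lower bound on the trajectory norm
  have hlow : ∀ r, r ∈ Set.Icc τ (τ + d) → c ≤ ‖u r‖ ^ 2 := by
    intro r hr
    have habs : |τ - r| ≤ d := by
      rw [abs_sub_comm, abs_le]
      constructor <;> [linarith [hr.1]; linarith [hr.2]]
    have h1 : ‖T τ r (u r)‖ ≤ L * ‖u r‖ := hU τ r habs (u r) (hmem r hr.1)
    have h2 : T τ r (u r) = x := by
      have := hcoc τ r
      simpa [hu, hTid τ, ContinuousLinearMap.id_apply] using this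
    rw [h2] at h1
    have hunn : (0:ℝ) ≤ ‖u r‖ := norm_nonneg _
    have hsq : ‖x‖ ^ 2 ≤ L ^ 2 * ‖u r‖ ^ 2 := by
      have := mul_self_le_mul_self (norm_nonneg x) h1
      calc ‖x‖ ^ 2 = ‖x‖ * ‖x‖ := sq ‖x‖
        _ ≤ (L * ‖u r‖) * (L * ‖u r‖) := this
        _ = L ^ 2 * ‖u r‖ ^ 2 := by ring
    rw [hcdef, div_le_iff₀ (by positivity)]
    linarith [hsq]
  -- the Lyapunov function along the trajectory
  set H : ℝ → ℝ := fun r => (inner ℝ (S r (u r)) (u r) : ℝ) with hH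
  have hHderiv : ∀ r, HasDerivAt H
      ((inner ℝ (S r (u r)) (A r (u r)) : ℝ)
        + ((inner ℝ (S' r (u r)) (u r) : ℝ) + (inner ℝ (S r (A r (u r))) (u r) : ℝ))) r := by
    intro r
    have hud : HasDerivAt u (A r (u r)) r := hTderiv τ x r
    have hf : HasDerivAt (fun s => S s (u s)) (S' r (u r) + S r (A r (u r))) r :=
      (hSderiv r).clm_apply hud
    have := hf.inner ℝ hud
    simpa [inner_add_left] using this
  have hlin : ∀ r : ℝ, HasDerivAt (fun s : ℝ => c * s) c r := by
    intro r
    simpa using (hasDerivAt_id r).const_mul c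
  have hHd : ∀ r : ℝ,
      HasDerivAt (fun s => H s + c * s) ((inner ℝ (S r (u r)) (A r (u r)) : ℝ)
        + ((inner ℝ (S' r (u r)) (u r) : ℝ) + (inner ℝ (S r (A r (u r))) (u r) : ℝ)) + c) r := by
    intro r
    exact (hHderiv r).add (hlin r)
  -- antitone
  have hanti : AntitoneOn (fun s => H s + c * s) (Set.Icc τ (τ + d)) := by
    apply antitoneOn_of_deriv_nonpos (convex_Icc _ _)
    · exact fun r hr => (hHd r).continuousAt.continuousWithinAt
    · intro r hr
      exact (hHd r).differentiableAt.differentiableWithinAt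
    · intro r hr
      rw [interior_Icc] at hr
      have hrm : r ∈ Set.Icc τ (τ + d) := Set.mem_Icc_of_Ioo hr
      rw [(hHd r).deriv]
      have h1 := hineq r (u r)
      have h2 := hlow r hrm
      have h3 : (0:ℝ) ≤ ‖u r‖ ^ 2 := by positivity
      linarith
  have hmem1 : τ ∈ Set.Icc τ (τ + d) := by constructor <;> linarith
  have hmem2 : τ + d ∈ Set.Icc τ (τ + d) := by constructor <;> linarith
  have hkey := hanti hmem1 hmem2 (by linarith)
  -- positivity at τ + d
  have hHpos : 0 < H (τ + d) := hpos (τ + d) (by linarith)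
  have hHτ : c * d ≤ H τ := by
    simp only at hkey
    nlinarith
  -- final arithmetic
  have hrw : d / l₁ ^ 2 * μ τ ^ (-(2 * k₁)) * ‖x‖ ^ 2 = c * d := by
    have h1 : μ τ ^ (-(2 * k₁)) = (μ τ ^ (2 * k₁))⁻¹ := Real.rpow_neg (μpos τ).le _
    have h2 : μ τ ^ (2 * k₁) = μ τ ^ k₁ * μ τ ^ k₁ := by
      rw [two_mul, Real.rpow_add (μpos τ)]
    rw [hcdef, hLdef, h1, h2]
    field_simp
  have huτ : u τ = x := by simp [hu, hTid τ]
  rw [hrw]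
  calc c * d ≤ H τ := hHτ
    _ = (inner ℝ (S τ x) x : ℝ) := by rw [hH]; simp only [huτ]
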